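/- Let J_k be the intersection graph of the intervals h_i^j = ((j−1)/i, j/i) for 1 ≤ j ≤ i ≤ k. Then for every proper coloring φ of J_k and every i ∈ {1,...,k}, the sum of the sizes of the i largest color classes of φ is at most k + (k−1) + ... + (k−i+1). -/

import Mathlib

open scoped BigOperators

/-- Vertices of `J k`: the pair `⟨i, j⟩ : (i : Fin k) × Fin (i+1)` represents the
interval `h_{i+1}^{j+1} = (j/(i+1), (j+1)/(i+1))`. -/
abbrev Jvert (k : ℕ) := (i : Fin k) × Fin (i.1 + 1)

/-- The open interval associated with a vertex of `J k`. -/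
def Jinterval {k : ℕ} (v : Jvert k) : Set ℝ :=
  Set.Ioo ((v.2 : ℝ) / ((v.1 : ℕ) + 1)) (((v.2 : ℕ) + 1) / ((v.1 : ℕ) + 1))

/-- The intersection graph `J k` of the intervals `h_i^j = ((j-1)/i, j/i)`,
`1 ≤ j ≤ i ≤ k`. -/
def Jgraph (k : ℕ) : SimpleGraph (Jvert k) where
  Adj a b := a ≠ b ∧ (Jinterval a ∩ Jinterval b).Nonempty
  symm := by
    constructor
    intro a b ⟨h1, h2⟩
    exact ⟨h1.symm, by rwa [Set.inter_comm]⟩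
  loopless := by
    constructor
    intro a ⟨h, _⟩
    exact h rfl

namespace Stmt10Aux

variable {k : ℕ}

/-- row index (1-based) of a vertex -/
def rr (v : Jvert k) : ℕ := v.1.1 + 1

/-- number of sample points in the interval of `v` -/
def MM (k : ℕ) (v : Jvert k) : ℕ := k.factorial / rr v

lemma rr_pos (v : Jvert k) : 0 < rr v := Nat.succ_pos _

lemma rr_le (v : Jvert k) : rr v ≤ k := v.1.2

lemma rr_dvd (v : Jvert k) : rr v ∣ k.factorial :=
  Nat.dvd_factorial (rr_pos v) (rr_le v)

lemma rr_mul_MM (v : Jvert k) : rr v * MM k v = k.factorial :=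
  Nat.mul_div_cancel' (rr_dvd v)

lemma MM_pos (v : Jvert k) : 0 < MM k v :=
  Nat.div_pos (Nat.le_of_dvd k.factorial_pos (rr_dvd v)) (rr_pos v)

/-- vertex `v` covers sample point `m` (representing `(2m+1)/(2·k!)`). -/
def covers (k : ℕ) (v : Jvert k) (m : ℕ) : Prop := m / MM k v = v.2.1

instance (v : Jvert k) (m : ℕ) : Decidable (covers k v m) := by
  unfold covers; infer_instance

lemma covers_iff (v : Jvert k) (m : ℕ) :
    covers k v m ↔ v.2.1 * MM k v ≤ m ∧ m < (v.2.1 + 1) * MM k v := by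
  constructor
  · rintro h
    refine ⟨?_, ?_⟩
    · rw [← h]; exact Nat.div_mul_le_self m (MM k v)
    · exact (Nat.div_lt_iff_lt_mul (MM_pos v)).1 (by rw [h]; omega)
  · rintro ⟨h1, h2⟩
    have hle : v.2.1 ≤ m / MM k v := (Nat.le_div_iff_mul_le (MM_pos v)).2 h1
    have h3 : m / MM k v < v.2.1 + 1 := (Nat.div_lt_iff_lt_mul (MM_pos v)).2 h2
    unfold covers; omega

lemma mem_point (v : Jvert k) (m : ℕ) (h : covers k v m) :
    ((2 * m + 1 : ℝ) / (2 * k.factorial)) ∈ Jinterval v := by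
  rw [covers_iff] at h
  obtain ⟨h1, h2⟩ := h
  have hN : (rr v : ℝ) * MM k v = k.factorial := by exact_mod_cast rr_mul_MM v
  have hr : (0:ℝ) < rr v := by exact_mod_cast rr_pos v
  have hM : (0:ℝ) < MM k v := by exact_mod_cast MM_pos v
  have h1' : (v.2.1 : ℝ) * MM k v ≤ m := by exact_mod_cast h1
  have h2' : (m : ℝ) < (v.2.1 + 1) * MM k v := by exact_mod_cast h2
  have hNpos : (0:ℝ) < 2 * k.factorial := by positivity
  have hrr : ((v.1 : ℕ) : ℝ) + 1 = (rr v : ℝ) := by simp [rr]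
  have ha : (2 * (v.2.1 * MM k v) : ℕ) < 2 * m + 1 := by omega
  have hb : (2 * m + 1 : ℕ) < 2 * ((v.2.1 + 1) * MM k v) := by omega
  have ha' : (2 * ((v.2.1:ℝ) * MM k v) : ℝ) < 2 * m + 1 := by exact_mod_cast ha
  have hb' : (2 * m + 1 : ℝ) < 2 * (((v.2.1:ℝ) + 1) * MM k v) := by exact_mod_cast hb
  constructor
  · rw [hrr, div_lt_div_iff₀ hr hNpos]
    have hv2 : (v.2 : ℝ) = (v.2.1 : ℝ) := rfl
    rw [hv2]
    nlinarith [mul_lt_mul_of_pos_right ha' hr]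
  · rw [hrr, div_lt_div_iff₀ hNpos hr]
    have hv2 : ((v.2 : ℕ) : ℝ) = (v.2.1 : ℝ) := rfl
    rw [hv2]
    nlinarith [mul_lt_mul_of_pos_right hb' hr]

lemma adj_of_covers (v w : Jvert k) (hne : v ≠ w) (m : ℕ)
    (hv : covers k v m) (hw : covers k w m) : (Jgraph k).Adj v w :=
  ⟨hne, ⟨(2 * m + 1 : ℝ) / (2 * k.factorial), mem_point v m hv, mem_point w m hw⟩⟩

lemma covers_card (v : Jvert k) :
    ((Finset.range k.factorial).filter (fun m => covers k v m)).card = MM k v := by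
  have hsub : (v.2.1 + 1) * MM k v ≤ k.factorial := by
    calc (v.2.1 + 1) * MM k v ≤ rr v * MM k v :=
          Nat.mul_le_mul_right _ v.2.2
      _ = k.factorial := rr_mul_MM v
  have : (Finset.range k.factorial).filter (fun m => covers k v m) =
      Finset.Ico (v.2.1 * MM k v) ((v.2.1 + 1) * MM k v) := by
    ext m
    simp only [Finset.mem_filter, Finset.mem_range, Finset.mem_Ico, covers_iff]
    omega
  rw [this, Nat.card_Ico, Nat.add_mul, Nat.one_mul, Nat.add_sub_cancel_left]

lemma sumA (d : ℕ) : ∀ i : ℕ, ∑ t ∈ Finset.range (d + i), max 0 ((t : ℤ) + 1 - d)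
    = ∑ s ∈ Finset.range i, ((s : ℤ) + 1) := by
  intro i
  induction i with
  | zero =>
    simp only [Nat.add_zero, Finset.range_zero, Finset.sum_empty]
    apply Finset.sum_eq_zero
    intro t ht
    rw [Finset.mem_range] at ht
    have : (t : ℤ) + 1 - d ≤ 0 := by
      have : (t : ℤ) < d := by exact_mod_cast ht
      omega
    omega
  | succ n ih =>
    rw [← Nat.add_assoc, Finset.sum_range_succ, Finset.sum_range_succ, ih]
    congr 1
    have : ((d + n : ℕ) : ℤ) + 1 - d = (n : ℤ) + 1 := by push_cast; ring
    rw [this]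
    omega

end Stmt10Aux

/-- In any proper coloring of `J k`, the total size of any `i` color classes
(in particular, of the `i` largest ones) is at most `k + (k-1) + ⋯ + (k-i+1)`. -/
theorem stmt_10 (k : ℕ) (φ : Jvert k → ℕ)
    (hφ : ∀ a b, (Jgraph k).Adj a b → φ a ≠ φ b)
    (i : ℕ) (hi1 : 1 ≤ i) (hik : i ≤ k)
    (C : Finset ℕ) (hC : C.card = i) :
    ∑ c ∈ C, (Finset.univ.filter (fun v : Jvert k => φ v = c)).card
      ≤ ∑ t ∈ Finset.range i, (k - t) := by
  classical
  open Stmt10Aux in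
  set N := k.factorial with hNdef
  have hN0 : 0 < N := k.factorial_pos
  set T : Finset (Jvert k) := Finset.univ.filter (fun v => φ v ∈ C) with hT
  -- LHS = T.card
  have hLHS : ∑ c ∈ C, (Finset.univ.filter (fun v : Jvert k => φ v = c)).card = T.card := by
    rw [Finset.card_eq_sum_card_fiberwise (f := φ) (s := T) (t := C)
      (fun v hv => (Finset.mem_filter.1 hv).2)]
    refine Finset.sum_congr rfl fun c hc => ?_
    congr 1
    ext v
    simp only [hT, Finset.mem_filter, Finset.mem_univ, true_and]
    constructor
    · intro h; exact ⟨by rw [h]; exact hc, h⟩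
    · tauto
  rw [hLHS]
  -- per-point bound
  have hpoint : ∀ m ∈ Finset.range N,
      (T.filter (fun v => covers k v m)).card ≤ i := by
    intro m _
    rw [← hC]
    apply Finset.card_le_card_of_injOn φ
    · intro v hv
      exact (Finset.mem_filter.1 ((Finset.mem_filter.1 hv).1)).2
    · intro v hv w hw hvw
      by_contra hne
      exact hφ v w (adj_of_covers v w hne m
        (Finset.mem_filter.1 hv).2 (Finset.mem_filter.1 hw).2) hvw
  -- double counting
  have hcount : ∑ v ∈ T, MM k v ≤ i * N := by
    have h1 : ∑ v ∈ T, MM k v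
        = ∑ m ∈ Finset.range N, (T.filter (fun v => covers k v m)).card := by
      calc ∑ v ∈ T, MM k v
          = ∑ v ∈ T, ∑ m ∈ Finset.range N, if covers k v m then 1 else 0 := by
            refine Finset.sum_congr rfl fun v _ => ?_
            rw [← covers_card v, Finset.card_filter]
        _ = ∑ m ∈ Finset.range N, ∑ v ∈ T, if covers k v m then 1 else 0 :=
            Finset.sum_comm
        _ = _ := by
            refine Finset.sum_congr rfl fun m _ => ?_
            rw [Finset.card_filter]
    rw [h1]
    calc ∑ m ∈ Finset.range N, (T.filter (fun v => covers k v m)).card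
        ≤ ∑ _m ∈ Finset.range N, i := Finset.sum_le_sum hpoint
      _ = N * i := by rw [Finset.sum_const, Finset.card_range, smul_eq_mul]
      _ = i * N := Nat.mul_comm _ _
  -- now the integer computation
  set d : ℕ := k - i with hd
  have hkd : k = d + i := by omega
  have key : (T.card : ℤ) * N ≤ (∑ t ∈ Finset.range i, ((k : ℤ) - t)) * N := by
    have e1 : (T.card : ℤ) * N = ∑ v ∈ T, (rr v : ℤ) * MM k v := by
      rw [Finset.sum_congr rfl fun v (_ : v ∈ T) =>
        show (rr v : ℤ) * MM k v = (N : ℤ) by exact_mod_cast rr_mul_MM v]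
      rw [Finset.sum_const, nsmul_eq_mul]
    have e2 : ∑ v ∈ T, (rr v : ℤ) * MM k v
        = ∑ v ∈ T, ((rr v : ℤ) - d) * MM k v + d * ∑ v ∈ T, (MM k v : ℤ) := by
      rw [Finset.mul_sum, ← Finset.sum_add_distrib]
      refine Finset.sum_congr rfl fun v _ => ?_
      ring
    have e3 : ∑ v ∈ T, ((rr v : ℤ) - d) * MM k v
        ≤ ∑ v ∈ (Finset.univ : Finset (Jvert k)), max 0 ((rr v : ℤ) - d) * MM k v := by
      calc ∑ v ∈ T, ((rr v : ℤ) - d) * MM k v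
          ≤ ∑ v ∈ T, max 0 ((rr v : ℤ) - d) * MM k v := by
            refine Finset.sum_le_sum fun v _ => ?_
            exact mul_le_mul_of_nonneg_right (le_max_right _ _) (by positivity)
        _ ≤ _ := by
            refine Finset.sum_le_sum_of_subset_of_nonneg (Finset.subset_univ T)
              fun v _ _ => ?_
            exact mul_nonneg (le_max_left _ _) (by positivity)
    have e4 : ∑ v ∈ (Finset.univ : Finset (Jvert k)), max 0 ((rr v : ℤ) - d) * MM k v
        = (N : ℤ) * ∑ t ∈ Finset.range k, max 0 ((t : ℤ) + 1 - d) := by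
      rw [← Finset.univ_sigma_univ, Finset.sum_sigma]
      have inner : ∀ a : Fin k,
          (∑ j : Fin (a.1 + 1),
            max 0 ((rr (⟨a, j⟩ : Jvert k) : ℤ) - d) * (MM k ⟨a, j⟩ : ℤ))
          = (N : ℤ) * max 0 ((a.1 : ℤ) + 1 - d) := by
        intro a
        have hconst : ∀ j : Fin (a.1 + 1),
            max 0 ((rr (⟨a, j⟩ : Jvert k) : ℤ) - d) * (MM k ⟨a, j⟩ : ℤ)
            = max 0 ((a.1 : ℤ) + 1 - d) * (N / (a.1 + 1) : ℕ) := by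
          intro j; rfl
        rw [Finset.sum_congr rfl fun j _ => hconst j, Finset.sum_const,
          Finset.card_univ, Fintype.card_fin, nsmul_eq_mul]
        have h2 : ((a.1 + 1 : ℕ) : ℤ) * (max 0 ((a.1 : ℤ) + 1 - d) * (N / (a.1 + 1) : ℕ))
            = max 0 ((a.1 : ℤ) + 1 - d) * (((a.1 + 1) * (N / (a.1 + 1)) : ℕ) : ℤ) := by
          push_cast; ring
        rw [h2, Nat.mul_div_cancel' (Nat.dvd_factorial (Nat.succ_pos _) a.2)]
        ring
      rw [Finset.sum_congr rfl fun a _ => inner a,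
        Fin.sum_univ_eq_sum_range (fun t => (N : ℤ) * max 0 ((t : ℤ) + 1 - d)) k,
        Finset.mul_sum]
    have e5 : ∑ t ∈ Finset.range k, max 0 ((t : ℤ) + 1 - d)
        = ∑ s ∈ Finset.range i, ((s : ℤ) + 1) := by
      rw [hkd]; exact sumA d i
    have e6 : ∑ t ∈ Finset.range i, ((k : ℤ) - t)
        = ∑ s ∈ Finset.range i, ((s : ℤ) + 1) + d * i := by
      have h1 : ∑ t ∈ Finset.range i, ((k : ℤ) - t)
          = ∑ t ∈ Finset.range i, ((d : ℤ) + ((i : ℤ) - t)) := by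
        refine Finset.sum_congr rfl fun t _ => ?_
        rw [hkd]; push_cast; ring
      have h2 : ∑ t ∈ Finset.range i, ((i : ℤ) - t)
          = ∑ s ∈ Finset.range i, ((s : ℤ) + 1) := by
        rw [← Finset.sum_range_reflect (fun s => (s : ℤ) + 1) i]
        refine Finset.sum_congr rfl fun t ht => ?_
        rw [Finset.mem_range] at ht
        have : ((i - 1 - t : ℕ) : ℤ) = (i : ℤ) - 1 - t := by
          push_cast [Nat.cast_sub (by omega : t ≤ i - 1), Nat.cast_sub (by omega : 1 ≤ i)]
          ring
        rw [this]; ring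
      rw [h1, Finset.sum_add_distrib, h2, Finset.sum_const, Finset.card_range,
        nsmul_eq_mul]
      ring
    have hcount' : (d : ℤ) * ∑ v ∈ T, (MM k v : ℤ) ≤ (d : ℤ) * (i * N) := by
      apply mul_le_mul_of_nonneg_left _ (by positivity)
      exact_mod_cast hcount
    calc (T.card : ℤ) * N
        = ∑ v ∈ T, ((rr v : ℤ) - d) * MM k v + d * ∑ v ∈ T, (MM k v : ℤ) := by
          rw [e1, e2]
      _ ≤ (N : ℤ) * ∑ t ∈ Finset.range k, max 0 ((t : ℤ) + 1 - d)
            + d * (i * N) := by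
          refine add_le_add ?_ hcount'
          rw [← e4]; exact e3
      _ = (∑ s ∈ Finset.range i, ((s : ℤ) + 1) + d * i) * N := by
          rw [e5]; ring
      _ = (∑ t ∈ Finset.range i, ((k : ℤ) - t)) * N := by rw [e6]
  -- conclude
  have hcastR : ((∑ t ∈ Finset.range i, (k - t) : ℕ) : ℤ)
      = ∑ t ∈ Finset.range i, ((k : ℤ) - t) := by
    push_cast [Nat.cast_sum]
    refine Finset.sum_congr rfl fun t ht => ?_
    rw [Finset.mem_range] at ht
    rw [Nat.cast_sub (by omega : t ≤ k)]
  have : (T.card : ℤ) ≤ ((∑ t ∈ Finset.range i, (k - t) : ℕ) : ℤ) := by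
    rw [hcastR]
    exact le_of_mul_le_mul_right key (by exact_mod_cast hN0)
  exact_mod_cast this
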